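/- Let σ > 0 and g_1,…,g_T, h_1,…,h_T ∈ ℝ^d with ‖g_s − h_s‖ ≤ σ for all s, and suppose for each t that Σ_{s=1}^{t-1} ‖g_s‖² ≥ Σ_{s=1}^{t-1} ‖g_s − h_s‖² − 3σ²L for a constant L ≥ 1 with γ² = 5σ²L. Then αD/sqrt(γ² + Σ_{s<t}‖g_s‖²) ≤ αD/sqrt(σ² + Σ_{s≤t}‖g_s − h_s‖²), and consequently Σ_{t=1}^T (αD)²·‖g_t − h_t‖²/(γ² + Σ_{s<t}‖g_s‖²) ≤ α²D²·log₂(1 + T). -/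

import Mathlib

open Finset

lemma log_aux' {b x : ℝ} (hb : 0 < b) (hx : 0 ≤ x) :
    x / (b + x) ≤ Real.log (b + x) - Real.log b := by
  have hbx : 0 < b + x := by linarith
  have h := Real.log_le_sub_one_of_pos (show (0:ℝ) < b / (b + x) from div_pos hb hbx)
  rw [Real.log_div (ne_of_gt hb) (ne_of_gt hbx)] at h
  have h2 : b / (b + x) - 1 = -(x / (b + x)) := by field_simp; ring
  linarith

lemma sum_div_le_log' (a : ℕ → ℝ) (ha : ∀ t, 0 ≤ a t) {c : ℝ} (hc : 0 < c) (T : ℕ) :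
    ∑ t ∈ Icc 1 T, a t / (c + ∑ s ∈ Icc 1 t, a s)
      ≤ Real.log (c + ∑ t ∈ Icc 1 T, a t) - Real.log c := by
  induction T with
  | zero => simp
  | succ n ih =>
    have h1 : (1:ℕ) ≤ n + 1 := by omega
    have hS : (0:ℝ) ≤ ∑ s ∈ Icc 1 n, a s := Finset.sum_nonneg fun s _ => ha s
    simp only [Finset.sum_Icc_succ_top h1]
    have key := log_aux' (show (0:ℝ) < c + ∑ s ∈ Icc 1 n, a s by linarith) (ha (n + 1))
    rw [show c + ((∑ s ∈ Icc 1 n, a s) + a (n + 1))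
        = (c + ∑ s ∈ Icc 1 n, a s) + a (n + 1) from by ring]
    linarith

/-- With `γ² = 5σ²L` and the empirical lower bound on `∑‖g‖²`, the decorrelated stepsize is
dominated by a noise-based stepsize, and the weighted sum of squared noises is at most
`α²D² log₂(1+T)`. -/
theorem decorrelated_stepsize_log_bound {d : ℕ}
    (α D σ L : ℝ) (hα : 0 < α) (hD : 0 < D) (hσ : 0 < σ) (hL : 1 ≤ L)
    (T : ℕ) (g h : ℕ → EuclideanSpace ℝ (Fin d))
    (hnoise : ∀ s, ‖g s - h s‖ ≤ σ)
    (hemp : ∀ t, ∑ s ∈ Finset.Icc 1 (t - 1), ‖g s - h s‖ ^ 2 - 3 * σ ^ 2 * L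
        ≤ ∑ s ∈ Finset.Icc 1 (t - 1), ‖g s‖ ^ 2) :
    (∀ t ∈ Finset.Icc 1 T,
        α * D / Real.sqrt (5 * σ ^ 2 * L + ∑ s ∈ Finset.Icc 1 (t - 1), ‖g s‖ ^ 2)
          ≤ α * D / Real.sqrt (σ ^ 2 + ∑ s ∈ Finset.Icc 1 t, ‖g s - h s‖ ^ 2))
    ∧ ∑ t ∈ Finset.Icc 1 T,
        (α * D) ^ 2 * ‖g t - h t‖ ^ 2
          / (5 * σ ^ 2 * L + ∑ s ∈ Finset.Icc 1 (t - 1), ‖g s‖ ^ 2)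
        ≤ α ^ 2 * D ^ 2 * Real.logb 2 (1 + T) := by
  set a : ℕ → ℝ := fun s => ‖g s - h s‖ ^ 2 with ha_def
  have ha : ∀ s, 0 ≤ a s := fun s => by positivity
  have haσ : ∀ s, a s ≤ σ ^ 2 := fun s => by
    have := hnoise s
    have h0 : (0:ℝ) ≤ ‖g s - h s‖ := norm_nonneg _
    have he : a s = ‖g s - h s‖ ^ 2 := rfl
    nlinarith
  -- key denominator comparison for t ≥ 1
  have hBA : ∀ t, 1 ≤ t →
      σ ^ 2 + ∑ s ∈ Icc 1 t, a s
        ≤ 5 * σ ^ 2 * L + ∑ s ∈ Icc 1 (t - 1), ‖g s‖ ^ 2 := by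
    intro t ht
    obtain ⟨n, rfl⟩ := Nat.exists_eq_add_of_le ht
    have hsplit : ∑ s ∈ Icc 1 (1 + n), a s
        = (∑ s ∈ Icc 1 n, a s) + a (n + 1) := by
      rw [show 1 + n = n + 1 from by omega]
      exact Finset.sum_Icc_succ_top (by omega) a
    have hemp' := hemp (1 + n)
    have hsub : (1 + n) - 1 = n := by omega
    rw [hsub] at hemp'
    rw [hsub, hsplit]
    have hsq : σ ^ 2 ≤ σ ^ 2 * L := by nlinarith
    have := haσ (n + 1)
    simp only [ha_def] at *
    linarith
  have hBpos : ∀ t, (0:ℝ) < σ ^ 2 + ∑ s ∈ Icc 1 t, a s := by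
    intro t
    have : (0:ℝ) ≤ ∑ s ∈ Icc 1 t, a s := Finset.sum_nonneg fun s _ => ha s
    positivity
  constructor
  · intro t htmem
    rw [Finset.mem_Icc] at htmem
    have hle := hBA t htmem.1
    have h1 : Real.sqrt (σ ^ 2 + ∑ s ∈ Icc 1 t, a s)
        ≤ Real.sqrt (5 * σ ^ 2 * L + ∑ s ∈ Icc 1 (t - 1), ‖g s‖ ^ 2) :=
      Real.sqrt_le_sqrt hle
    have h2 : 0 < Real.sqrt (σ ^ 2 + ∑ s ∈ Icc 1 t, a s) :=
      Real.sqrt_pos.mpr (hBpos t)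
    have hαD : 0 < α * D := mul_pos hα hD
    exact div_le_div_of_nonneg_left hαD.le h2 h1
  · -- second part
    have step1 : ∑ t ∈ Icc 1 T,
        (α * D) ^ 2 * a t / (5 * σ ^ 2 * L + ∑ s ∈ Icc 1 (t - 1), ‖g s‖ ^ 2)
        ≤ ∑ t ∈ Icc 1 T, (α * D) ^ 2 * a t / (σ ^ 2 + ∑ s ∈ Icc 1 t, a s) := by
      apply Finset.sum_le_sum
      intro t htmem
      rw [Finset.mem_Icc] at htmem
      have hle := hBA t htmem.1
      have hBp := hBpos t
      have hnum : (0:ℝ) ≤ (α * D) ^ 2 * a t := by positivity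
      exact div_le_div_of_nonneg_left hnum hBp hle
    have step2 : ∑ t ∈ Icc 1 T, (α * D) ^ 2 * a t / (σ ^ 2 + ∑ s ∈ Icc 1 t, a s)
        = (α * D) ^ 2 * ∑ t ∈ Icc 1 T, a t / (σ ^ 2 + ∑ s ∈ Icc 1 t, a s) := by
      rw [Finset.mul_sum]
      exact Finset.sum_congr rfl fun t _ => by ring
    have step3 := sum_div_le_log' a ha (show (0:ℝ) < σ ^ 2 by positivity) T
    -- bound the log difference by logb 2 (1+T)
    have hsumT : ∑ t ∈ Icc 1 T, a t ≤ T * σ ^ 2 := by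
      calc ∑ t ∈ Icc 1 T, a t ≤ ∑ t ∈ Icc 1 T, σ ^ 2 :=
            Finset.sum_le_sum fun t _ => haσ t
        _ = T * σ ^ 2 := by
            rw [Finset.sum_const, Nat.card_Icc]
            simp
    have hT0 : (0:ℝ) ≤ (T:ℝ) := Nat.cast_nonneg T
    have hT1 : (1:ℝ) ≤ 1 + (T:ℝ) := by linarith
    have step4 : Real.log (σ ^ 2 + ∑ t ∈ Icc 1 T, a t) - Real.log (σ ^ 2)
        ≤ Real.log (1 + T) := by
      have hmul : Real.log (σ ^ 2 * (1 + T)) = Real.log (σ ^ 2) + Real.log (1 + T) := by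
        rw [Real.log_mul (by positivity) (by positivity)]
      have hmono : Real.log (σ ^ 2 + ∑ t ∈ Icc 1 T, a t) ≤ Real.log (σ ^ 2 * (1 + T)) := by
        apply Real.log_le_log (hBpos T)
        nlinarith
      linarith
    have step5 : Real.log (1 + T) ≤ Real.logb 2 (1 + T) := by
      rw [Real.logb, le_div_iff₀ (Real.log_pos one_lt_two)]
      have hl2 : Real.log 2 ≤ 1 := by
        have := Real.log_two_lt_d9
        linarith
      have hl0 : 0 ≤ Real.log (1 + T) := Real.log_nonneg hT1
      nlinarith
    calc ∑ t ∈ Icc 1 T,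
          (α * D) ^ 2 * a t / (5 * σ ^ 2 * L + ∑ s ∈ Icc 1 (t - 1), ‖g s‖ ^ 2)
        ≤ (α * D) ^ 2 * ∑ t ∈ Icc 1 T, a t / (σ ^ 2 + ∑ s ∈ Icc 1 t, a s) := by
          rw [← step2]; exact step1
      _ ≤ (α * D) ^ 2 * Real.logb 2 (1 + T) := by
          apply mul_le_mul_of_nonneg_left _ (by positivity)
          linarith
      _ = α ^ 2 * D ^ 2 * Real.logb 2 (1 + T) := by ring
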